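/- Let n ≥ 1 and s ≥ 1 be integers and let u ∈ ℂ with |u| > 1, and set z = (u + u⁻¹)/2. Then K_{n,s}(z) = 2π Σ_{k=0}^{s} C(2s+1, k) u^{2nk} / (u^{(2s+1)n} (u^n + u^{−n})^{2s} (u − u⁻¹)). -/

import Mathlib

open Complex Real

/-- Chebyshev polynomial of the first kind of degree `m`, evaluated at a complex point. -/
noncomputable def chebT (m : ℕ) (x : ℂ) : ℂ := (Polynomial.Chebyshev.T ℂ m).eval x

/-- `ρ_{n,s}(z) = ∫_{−1}^{1} T_n(t)^(2s+1) / ((z − t) √(1 − t²)) dt`. -/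
noncomputable def rhoNS (n s : ℕ) (z : ℂ) : ℂ :=
  ∫ t in (-1:ℝ)..1, chebT n (t : ℂ) ^ (2*s+1) / ((z - (t:ℂ)) * (Real.sqrt (1 - t^2) : ℂ))

/-- The kernel `K_{n,s}(z) = ρ_{n,s}(z) / T_n(z)^(2s)`. -/
noncomputable def kerK (n s : ℕ) (z : ℂ) : ℂ := rhoNS n s z / chebT n z ^ (2*s)

lemma u_ne (u : ℂ) (hu : 1 < ‖u‖) : u ≠ 0 := by
  intro h; rw [h] at hu; simp at hu; linarith

lemma uu_ne (u : ℂ) (hu : 1 < ‖u‖) : u - u⁻¹ ≠ 0 := by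
  intro h
  rw [sub_eq_zero] at h
  have h1 : ‖u⁻¹‖ < 1 := by rw [norm_inv, inv_lt_one_iff₀]; right; exact hu
  rw [h] at hu; linarith

lemma denom_fact (u : ℂ) (hu : 1 < ‖u‖) (θ : ℝ) :
    (u + u⁻¹)/2 - (Real.cos θ : ℂ) =
      (u - Complex.exp (θ * I)) * (u * Complex.exp (θ * I) - 1) / (2 * u * Complex.exp (θ * I)) := by
  have hu0 : u ≠ 0 := u_ne u hu
  have hw : Complex.exp (θ * I) ≠ 0 := Complex.exp_ne_zero _
  rw [Complex.ofReal_cos, Complex.cos]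
  have : Complex.exp (-(θ:ℂ) * I) = (Complex.exp ((θ:ℂ) * I))⁻¹ := by
    rw [← Complex.exp_neg]; ring_nf
  rw [this]
  field_simp
  ring

lemma denom_ne (u : ℂ) (hu : 1 < ‖u‖) (θ : ℝ) :
    (u + u⁻¹)/2 - (Real.cos θ : ℂ) ≠ 0 := by
  rw [denom_fact u hu θ]
  have hw : ‖Complex.exp ((θ:ℂ) * I)‖ = 1 := by
    simpa using Complex.abs_exp_ofReal_mul_I θ
  have h1 : u - Complex.exp (θ * I) ≠ 0 := by
    intro h
    rw [sub_eq_zero] at h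
    rw [h, hw] at hu; exact lt_irrefl _ hu
  have h2 : u * Complex.exp (θ * I) - 1 ≠ 0 := by
    intro h
    rw [sub_eq_zero] at h
    have : ‖u * Complex.exp (θ*I)‖ = 1 := by rw [h]; simp
    rw [norm_mul, hw, mul_one] at this
    rw [this] at hu; exact lt_irrefl _ hu
  exact div_ne_zero (mul_ne_zero h1 h2)
    (mul_ne_zero (mul_ne_zero two_ne_zero (u_ne u hu)) (Complex.exp_ne_zero _))

lemma Jpos (u : ℂ) (hu : 1 < ‖u‖) (m : ℕ) :
    (∫ θ in (0:ℝ)..(2*π), Complex.exp (m*θ*I) / ((u+u⁻¹)/2 - (Real.cos θ:ℂ)))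
      = 4*π/(u^m*(u-u⁻¹)) := by
  have hu0 : u ≠ 0 := u_ne u hu
  have hinv : ‖u⁻¹‖ < 1 := by rw [norm_inv, inv_lt_one_iff₀]; right; exact hu
  set f : ℂ → ℂ := fun w => w^m * (u - w)⁻¹ with hf
  have hd : DifferentiableOn ℂ f (Metric.closedBall 0 1) := by
    intro w hw
    have : u - w ≠ 0 := by
      intro h; rw [sub_eq_zero] at h
      rw [Metric.mem_closedBall, dist_zero_right] at hw
      rw [← h] at hw; linarith
    exact ((differentiable_pow m).differentiableAt.mul
      (((differentiableAt_const u).sub differentiableAt_id).inv this)).differentiableWithinAt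
  have hC := hd.circleIntegral_sub_inv_smul (w := u⁻¹)
    (by rw [Metric.mem_ball, dist_zero_right]; exact hinv)
  rw [circleIntegral] at hC
  simp only [deriv_circleMap, circleMap_zero, Complex.ofReal_one, one_mul] at hC
  have key : ∀ θ : ℝ, (Complex.exp (θ*I) * I) • ((Complex.exp (θ*I) - u⁻¹)⁻¹ • f (Complex.exp (θ*I)))
      = (I/2) • (Complex.exp (m*θ*I) / ((u+u⁻¹)/2 - (Real.cos θ:ℂ))) := by
    intro θ
    have hw : Complex.exp ((θ:ℂ)*I) ≠ 0 := Complex.exp_ne_zero _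
    have hwn : ‖Complex.exp ((θ:ℂ) * I)‖ = 1 := by
      simpa using Complex.abs_exp_ofReal_mul_I θ
    have h1 : u - Complex.exp (θ*I) ≠ 0 := by
      intro h; rw [sub_eq_zero] at h; rw [h, hwn] at hu; exact lt_irrefl _ hu
    have h2 : u * Complex.exp (θ*I) - 1 ≠ 0 := by
      intro h; rw [sub_eq_zero] at h
      have : ‖u * Complex.exp (θ*I)‖ = 1 := by rw [h]; simp
      rw [norm_mul, hwn, mul_one] at this
      rw [this] at hu; exact lt_irrefl _ hu
    have h3 : Complex.exp (θ*I) - u⁻¹ ≠ 0 := by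
      intro h; rw [sub_eq_zero] at h; rw [← h, hwn] at hinv; exact lt_irrefl _ hinv
    have hm : Complex.exp ((m:ℂ)*θ*I) = Complex.exp ((θ:ℂ)*I)^m := by
      rw [mul_assoc, Complex.exp_nat_mul]
    rw [denom_fact u hu θ, hf]
    simp only [smul_eq_mul, hm, div_div_eq_mul_div]
    have h5 : Complex.exp (θ*I) + Complex.exp (θ*I) * u^2 + (-(Complex.exp (θ*I)^2 * u) - u) ≠ 0 := by
      have heq : Complex.exp ((θ:ℂ)*I) + Complex.exp ((θ:ℂ)*I) * u^2 + (-(Complex.exp ((θ:ℂ)*I)^2 * u) - u)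
          = (u - Complex.exp (θ*I)) * (u * Complex.exp (θ*I) - 1) := by ring
      rw [heq]; exact mul_ne_zero h1 h2
    field_simp [h5]
  rw [intervalIntegral.integral_congr (fun θ _ => key θ)] at hC
  rw [intervalIntegral.integral_smul] at hC
  rw [smul_eq_mul, smul_eq_mul] at hC
  have h4 : (-2*I)*(I/2) = (1:ℂ) := by linear_combination (-1:ℂ) * Complex.I_mul_I
  have hJ : (∫ θ in (0:ℝ)..(2*π), Complex.exp (m*θ*I) / ((u+u⁻¹)/2 - (Real.cos θ:ℂ)))
      = -2*I*(2*π*I*(f u⁻¹)) := by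
    rw [← hC, ← mul_assoc, h4, one_mul]
  rw [hJ, hf]
  simp only []
  calc -2*I*(2*(π:ℂ)*I*((u⁻¹)^m*(u-u⁻¹)⁻¹)) = (4*π)*((u⁻¹)^m*(u-u⁻¹)⁻¹) := by
        linear_combination (-4*(π:ℂ)*((u⁻¹)^m*(u-u⁻¹)⁻¹)) * Complex.I_mul_I
    _ = 4*π/(u^m*(u-u⁻¹)) := by
        rw [inv_pow, ← mul_inv, ← div_eq_mul_inv]

lemma Jneg (u : ℂ) (hu : 1 < ‖u‖) (m : ℕ) :
    (∫ θ in (0:ℝ)..(2*π), Complex.exp (-((m:ℂ)*θ*I)) / ((u+u⁻¹)/2 - (Real.cos θ:ℂ)))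
      = 4*π/(u^m*(u-u⁻¹)) := by
  have h := intervalIntegral.integral_comp_sub_left (a := (0:ℝ)) (b := 2*π)
    (fun θ : ℝ => Complex.exp (m*θ*I) / ((u+u⁻¹)/2 - (Real.cos θ:ℂ))) (2*π)
  simp only [sub_self, sub_zero] at h
  rw [← Jpos u hu m, ← h]
  apply intervalIntegral.integral_congr
  intro x _
  simp only
  have e1 : (m:ℂ) * ((2*π - x : ℝ):ℂ) * I = m*(2*(π:ℂ)*I) + (-((m:ℂ)*x*I)) := by
    push_cast; ring
  rw [e1, Complex.exp_add, Complex.exp_nat_mul_two_pi_mul_I, one_mul, Real.cos_two_pi_sub]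

lemma Kab (u : ℂ) (hu : 1 < ‖u‖) (a b : ℕ) :
    (∫ θ in (0:ℝ)..(2*π), Complex.exp ((a:ℂ)*θ*I) * Complex.exp (-((b:ℂ)*θ*I))
        / ((u+u⁻¹)/2 - (Real.cos θ:ℂ)))
      = 4*π/(u^(Nat.dist a b)*(u-u⁻¹)) := by
  rcases le_total b a with h | h
  · have key : ∀ θ:ℝ, Complex.exp ((a:ℂ)*θ*I) * Complex.exp (-((b:ℂ)*θ*I))
        = Complex.exp (((a-b : ℕ):ℂ)*θ*I) := by
      intro θ
      rw [← Complex.exp_add]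
      congr 1
      push_cast [Nat.cast_sub h]
      ring
    rw [intervalIntegral.integral_congr (fun θ _ => by rw [key θ])]
    rw [Jpos u hu (a-b), Nat.dist_eq_sub_of_le_right h]
  · have key : ∀ θ:ℝ, Complex.exp ((a:ℂ)*θ*I) * Complex.exp (-((b:ℂ)*θ*I))
        = Complex.exp (-(((b-a : ℕ):ℂ)*θ*I)) := by
      intro θ
      rw [← Complex.exp_add]
      congr 1
      push_cast [Nat.cast_sub h]
      ring
    rw [intervalIntegral.integral_congr (fun θ _ => by rw [key θ])]
    rw [Jneg u hu (b-a), Nat.dist_eq_sub_of_le h]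

lemma cos_image : Real.cos '' Set.Ioo 0 π = Set.Ioo (-1) 1 := by
  apply Set.Subset.antisymm
  · rintro x ⟨θ, hθ, rfl⟩
    constructor
    · have := Real.strictAntiOn_cos ⟨hθ.1.le, hθ.2.le⟩ ⟨Real.pi_pos.le.trans (le_refl π), le_refl π⟩ hθ.2
      rw [Real.cos_pi] at this
      simpa using this
    · have := Real.strictAntiOn_cos ⟨le_refl 0, Real.pi_pos.le⟩ ⟨hθ.1.le, hθ.2.le⟩ hθ.1
      rw [Real.cos_zero] at this
      simpa using this
  · have h := intermediate_value_Ioo' Real.pi_pos.le Real.continuous_cos.continuousOn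
    simpa [Real.cos_pi, Real.cos_zero] using h

lemma smul_helper (S A B : ℂ) (hS : S ≠ 0) (hB : B ≠ 0) :
    S * (A / (B * S)) = A / B := by
  field_simp

lemma rho_eq (n s : ℕ) (u : ℂ) (hu : 1 < ‖u‖) :
    rhoNS n s ((u+u⁻¹)/2)
      = ∫ θ in (0:ℝ)..π, ((Real.cos (n*θ) :ℝ):ℂ)^(2*s+1) / ((u+u⁻¹)/2 - (Real.cos θ:ℂ)) := by
  rw [rhoNS]
  rw [intervalIntegral.integral_of_le (by norm_num : (-1:ℝ) ≤ 1)]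
  rw [MeasureTheory.integral_Ioc_eq_integral_Ioo]
  rw [← cos_image]
  rw [MeasureTheory.integral_image_eq_integral_abs_deriv_smul measurableSet_Ioo
      (fun θ _ => (Real.hasDerivAt_cos θ).hasDerivWithinAt)
      (Real.injOn_cos.mono Set.Ioo_subset_Icc_self) _]
  rw [intervalIntegral.integral_of_le Real.pi_pos.le,
      MeasureTheory.integral_Ioc_eq_integral_Ioo]
  apply MeasureTheory.setIntegral_congr_fun measurableSet_Ioo
  intro θ hθ
  have hsin : 0 < Real.sin θ := Real.sin_pos_of_pos_of_lt_pi hθ.1 hθ.2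
  have h1 : |(-Real.sin θ)| = Real.sin θ := by rw [abs_neg, abs_of_pos hsin]
  have h2 : Real.sqrt (1 - Real.cos θ^2) = Real.sin θ := by
    rw [show (1 : ℝ) - Real.cos θ^2 = Real.sin θ^2 by
        have := Real.sin_sq_add_cos_sq θ; linarith]
    exact Real.sqrt_sq hsin.le
  have h3 : chebT n ((Real.cos θ : ℝ):ℂ) = ((Real.cos (n*θ) : ℝ):ℂ) := by
    rw [chebT, Complex.ofReal_cos, Complex.ofReal_cos,
        Polynomial.Chebyshev.T_complex_cos]
    push_cast
    ring_nf
  simp only [h1, h2, h3]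
  rw [Complex.real_smul]
  exact smul_helper _ _ _ (Complex.ofReal_ne_zero.mpr hsin.ne') (denom_ne u hu θ)

lemma chebT_z (n : ℕ) (u : ℂ) (hu : 1 < ‖u‖) :
    chebT n ((u+u⁻¹)/2) = (u^n + (u⁻¹)^n)/2 := by
  have hu0 : u ≠ 0 := u_ne u hu
  set c : ℂ := Complex.log u * I⁻¹ with hc
  have hcI : c * I = Complex.log u := by
    rw [hc, mul_assoc, inv_mul_cancel₀ Complex.I_ne_zero, mul_one]
  have hexp : Complex.exp (c * I) = u := by rw [hcI, Complex.exp_log hu0]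
  have hexp' : Complex.exp (-(c * I)) = u⁻¹ := by rw [Complex.exp_neg, hexp]
  have hexp2 : Complex.exp (-c * I) = u⁻¹ := by
    rw [show -c*I = -(c*I) by ring, hexp']
  have hzc : (u+u⁻¹)/2 = Complex.cos c := by
    rw [Complex.cos, hexp, hexp2]
  rw [hzc, chebT, Polynomial.Chebyshev.T_complex_cos, Complex.cos]
  have en : ((n:ℤ):ℂ) * c * I = (n:ℂ)*(c*I) := by push_cast; ring
  have en' : -(((n:ℤ):ℂ) * c) * I = (n:ℂ)*(-(c*I)) := by push_cast; ring
  rw [en, en', Complex.exp_nat_mul, Complex.exp_nat_mul, hexp, hexp']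


lemma F_cont (n s : ℕ) (u : ℂ) (hu : 1 < ‖u‖) :
    Continuous (fun θ:ℝ => ((Real.cos (n*θ) :ℝ):ℂ)^(2*s+1) / ((u+u⁻¹)/2 - (Real.cos θ:ℂ))) := by
  apply Continuous.div
  · exact (Complex.continuous_ofReal.comp (Real.continuous_cos.comp
      (continuous_const.mul continuous_id))).pow _
  · exact continuous_const.sub (Complex.continuous_ofReal.comp Real.continuous_cos)
  · exact fun θ => denom_ne u hu θ

lemma double (n s : ℕ) (u : ℂ) (hu : 1 < ‖u‖) :
    (∫ θ in (0:ℝ)..(2*π), ((Real.cos (n*θ) :ℝ):ℂ)^(2*s+1) / ((u+u⁻¹)/2 - (Real.cos θ:ℂ)))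
      = 2 * ∫ θ in (0:ℝ)..π, ((Real.cos (n*θ) :ℝ):ℂ)^(2*s+1) / ((u+u⁻¹)/2 - (Real.cos θ:ℂ)) := by
  have hFc := F_cont n s u hu
  have hadj := intervalIntegral.integral_add_adjacent_intervals (μ := MeasureTheory.volume) (a := (0:ℝ)) (b := π) (c := 2*π)
    (hFc.intervalIntegrable _ _) (hFc.intervalIntegrable _ _)
  rw [← hadj]
  have h := intervalIntegral.integral_comp_sub_left (a := (0:ℝ)) (b := π)
    (fun θ:ℝ => ((Real.cos (n*θ) :ℝ):ℂ)^(2*s+1) / ((u+u⁻¹)/2 - (Real.cos θ:ℂ))) (2*π)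
  have hb : 2*π - π = π := by ring
  rw [hb, sub_zero] at h
  have hrefl : ∀ x:ℝ,
      ((Real.cos (n*(2*π - x)) :ℝ):ℂ)^(2*s+1) / ((u+u⁻¹)/2 - (Real.cos (2*π - x):ℂ))
      = ((Real.cos (n*x) :ℝ):ℂ)^(2*s+1) / ((u+u⁻¹)/2 - (Real.cos x:ℂ)) := by
    intro x
    rw [Real.cos_two_pi_sub]
    have e : (n:ℝ) * (2*π - x) = n*(2*π) - n*x := by ring
    rw [e, Real.cos_nat_mul_two_pi_sub]
  have h2 : (∫ θ in (0:ℝ)..π, ((Real.cos (n*θ) :ℝ):ℂ)^(2*s+1) / ((u+u⁻¹)/2 - (Real.cos θ:ℂ)))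
      = ∫ θ in π..(2*π), ((Real.cos (n*θ) :ℝ):ℂ)^(2*s+1) / ((u+u⁻¹)/2 - (Real.cos θ:ℂ)) := by
    rw [← h]
    exact intervalIntegral.integral_congr (fun x _ => (hrefl x).symm)
  rw [← h2]
  ring

lemma expand (n s : ℕ) (u : ℂ) (hu : 1 < ‖u‖) :
    (∫ θ in (0:ℝ)..(2*π), ((Real.cos (n*θ) :ℝ):ℂ)^(2*s+1) / ((u+u⁻¹)/2 - (Real.cos θ:ℂ)))
      = ∑ j ∈ Finset.range (2*s+2), ((2:ℂ)^(2*s+1))⁻¹ * ((2*s+1).choose j : ℂ)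
          * (4*π/(u^(Nat.dist (j*n) ((2*s+1-j)*n))*(u-u⁻¹))) := by
  have hpt : ∀ θ:ℝ, ((Real.cos (n*θ) :ℝ):ℂ)^(2*s+1) / ((u+u⁻¹)/2 - (Real.cos θ:ℂ))
      = ∑ j ∈ Finset.range (2*s+2), ((2:ℂ)^(2*s+1))⁻¹ * ((2*s+1).choose j : ℂ)
          * (Complex.exp (((j*n : ℕ):ℂ)*θ*I) * Complex.exp (-((((2*s+1-j)*n : ℕ):ℂ)*θ*I))
              / ((u+u⁻¹)/2 - (Real.cos θ:ℂ))) := by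
    intro θ
    have hcosn : ((Real.cos (n*θ) :ℝ):ℂ)
        = (Complex.exp (((n*θ:ℝ):ℂ)*I) + Complex.exp (-(((n*θ:ℝ):ℂ)*I)))/2 := by
      rw [Complex.ofReal_cos, Complex.cos]
      rw [show -(((n*θ:ℝ):ℂ))*I = -((((n*θ:ℝ)):ℂ)*I) by ring]
    rw [hcosn, div_pow, add_pow]
    rw [show 2*s+1+1 = 2*s+2 by omega]
    rw [Finset.sum_div, Finset.sum_div]
    refine Finset.sum_congr rfl (fun j hj => ?_)
    have hjle : j ≤ 2*s+1 := by
      have := Finset.mem_range.mp hj; omega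
    have e1 : Complex.exp (((n*θ:ℝ):ℂ)*I)^j = Complex.exp (((j*n : ℕ):ℂ)*θ*I) := by
      rw [← Complex.exp_nat_mul]; congr 1; push_cast; ring
    have e2 : Complex.exp (-(((n*θ:ℝ):ℂ)*I))^(2*s+1-j)
        = Complex.exp (-((((2*s+1-j)*n : ℕ):ℂ)*θ*I)) := by
      rw [← Complex.exp_nat_mul]; congr 1; push_cast [Nat.cast_sub hjle]; ring
    rw [e1, e2]
    ring
  rw [intervalIntegral.integral_congr (fun θ _ => hpt θ)]
  have hInt : ∀ j ∈ Finset.range (2*s+2), IntervalIntegrable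
      (fun θ:ℝ => ((2:ℂ)^(2*s+1))⁻¹ * ((2*s+1).choose j : ℂ)
          * (Complex.exp (((j*n : ℕ):ℂ)*θ*I) * Complex.exp (-((((2*s+1-j)*n : ℕ):ℂ)*θ*I))
              / ((u+u⁻¹)/2 - (Real.cos θ:ℂ)))) MeasureTheory.volume 0 (2*π) := by
    intro j _
    apply Continuous.intervalIntegrable
    apply Continuous.mul continuous_const
    apply Continuous.div
    · exact (Complex.continuous_exp.comp ((continuous_const.mul
        Complex.continuous_ofReal).mul continuous_const)).mul
        (Complex.continuous_exp.comp (((continuous_const.mul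
          Complex.continuous_ofReal).mul continuous_const).neg))
    · exact continuous_const.sub (Complex.continuous_ofReal.comp Real.continuous_cos)
    · exact fun θ => denom_ne u hu θ
  rw [intervalIntegral.integral_finset_sum hInt]
  refine Finset.sum_congr rfl (fun j hj => ?_)
  rw [intervalIntegral.integral_const_mul]
  rw [Kab u hu (j*n) ((2*s+1-j)*n)]

lemma pair_sum (n s : ℕ) (v : ℂ) :
    (∑ j ∈ Finset.range (2*s+2), ((2*s+1).choose j : ℂ) * v^(Nat.dist (j*n) ((2*s+1-j)*n)))
      = 2 * ∑ k ∈ Finset.range (s+1), ((2*s+1).choose k : ℂ) * v^((2*s+1-2*k)*n) := by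
  have hterm : ∀ j, j ≤ s → Nat.dist (j*n) ((2*s+1-j)*n) = (2*s+1-2*j)*n := by
    intro j hj
    rw [Nat.dist_eq_sub_of_le (Nat.mul_le_mul_right n (by omega)), ← Nat.sub_mul]
    congr 1
    omega
  rw [Finset.range_eq_Ico,
      ← Finset.sum_Ico_consecutive _ (Nat.zero_le (s+1)) (by omega : s+1 ≤ 2*s+2)]
  have h1 : (∑ j ∈ Finset.Ico 0 (s+1), ((2*s+1).choose j : ℂ) * v^(Nat.dist (j*n) ((2*s+1-j)*n)))
      = ∑ k ∈ Finset.range (s+1), ((2*s+1).choose k : ℂ) * v^((2*s+1-2*k)*n) := by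
    rw [← Finset.range_eq_Ico]
    refine Finset.sum_congr rfl (fun j hj => ?_)
    rw [hterm j (by have := Finset.mem_range.mp hj; omega)]
  have h2 : (∑ j ∈ Finset.Ico (s+1) (2*s+2),
        ((2*s+1).choose j : ℂ) * v^(Nat.dist (j*n) ((2*s+1-j)*n)))
      = ∑ k ∈ Finset.range (s+1), ((2*s+1).choose k : ℂ) * v^((2*s+1-2*k)*n) := by
    refine Finset.sum_nbij' (i := fun j => 2*s+1-j) (j := fun k => 2*s+1-k) ?_ ?_ ?_ ?_ ?_
    · intro j hj; simp only [Finset.mem_Ico] at hj; simp only [Finset.mem_range]; omega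
    · intro k hk; simp only [Finset.mem_range] at hk; simp only [Finset.mem_Ico]; omega
    · intro j hj; simp only [Finset.mem_Ico] at hj; show 2*s+1-(2*s+1-j) = j; omega
    · intro k hk; simp only [Finset.mem_range] at hk; show 2*s+1-(2*s+1-k) = k; omega
    · intro j hj
      simp only [Finset.mem_Ico] at hj
      have hd : Nat.dist (j*n) ((2*s+1-j)*n) = (2*s+1-2*(2*s+1-j))*n := by
        rw [Nat.dist_comm]
        have h3 := hterm (2*s+1-j) (by omega)
        rw [show 2*s+1-(2*s+1-j) = j by omega] at h3
        exact h3
      rw [hd, ← Nat.choose_symm (by omega : j ≤ 2*s+1)]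
  rw [h1, h2, Finset.range_eq_Ico]
  ring

lemma A_ne (n : ℕ) (hn : 1 ≤ n) (u : ℂ) (hu : 1 < ‖u‖) : u^n + (u⁻¹)^n ≠ 0 := by
  intro h
  have h1 : ‖u^n‖ = ‖(u⁻¹)^n‖ := by
    rw [eq_neg_of_add_eq_zero_left h, norm_neg]
  rw [norm_pow, norm_pow, norm_inv, inv_pow] at h1
  have hgt : 1 < ‖u‖^n := one_lt_pow₀ hu (by omega)
  have hpos : (0:ℝ) < ‖u‖^n := by positivity
  have h2 := mul_inv_cancel₀ (ne_of_gt hpos)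
  rw [← h1] at h2
  nlinarith

/-- For `n ≥ 1`, `s ≥ 1`, `|u| > 1` and `z = (u + u⁻¹)/2`,
`K_{n,s}(z) = 2π Σ_{k=0}^{s} C(2s+1, k) u^(2nk) /
  (u^((2s+1)n) (u^n + u^(−n))^(2s) (u − u⁻¹))`. -/
theorem stmt3 (n s : ℕ) (hn : 1 ≤ n) (hs : 1 ≤ s) (u : ℂ) (hu : 1 < ‖u‖)
    (z : ℂ) (hz : z = (u + u⁻¹) / 2) :
    kerK n s z =
      2 * (π:ℂ) * (∑ k ∈ Finset.range (s + 1), (Nat.choose (2*s+1) k : ℂ) * u ^ (2*n*k)) /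
        (u ^ ((2*s+1)*n) * (u ^ n + u ^ (-(n:ℤ))) ^ (2*s) * (u - u⁻¹)) := by
  have hu0 := u_ne u hu
  have huu := uu_ne u hu
  have hA := A_ne n hn u hu
  subst hz
  rw [kerK, rho_eq n s u hu, chebT_z n u hu]
  have hval : (∫ θ in (0:ℝ)..π, ((Real.cos (n*θ) :ℝ):ℂ)^(2*s+1) / ((u+u⁻¹)/2 - (Real.cos θ:ℂ)))
      = (2:ℂ)⁻¹ * ∑ j ∈ Finset.range (2*s+2), ((2:ℂ)^(2*s+1))⁻¹ * ((2*s+1).choose j : ℂ)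
          * (4*π/(u^(Nat.dist (j*n) ((2*s+1-j)*n))*(u-u⁻¹))) := by
    have he := expand n s u hu
    rw [double n s u hu] at he
    rw [← he]; ring
  rw [hval]
  have hrw : ∀ j ∈ Finset.range (2*s+2), ((2:ℂ)^(2*s+1))⁻¹ * ((2*s+1).choose j : ℂ)
        * (4*π/(u^(Nat.dist (j*n) ((2*s+1-j)*n))*(u-u⁻¹)))
      = ((2:ℂ)^(2*s+1))⁻¹ * (4*π) * (u-u⁻¹)⁻¹
        * (((2*s+1).choose j : ℂ) * (u⁻¹)^(Nat.dist (j*n) ((2*s+1-j)*n))) := by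
    intro j _
    rw [div_eq_mul_inv, mul_inv, inv_pow]
    ring
  rw [Finset.sum_congr rfl hrw, ← Finset.mul_sum, pair_sum n s u⁻¹]
  have hS : (∑ k ∈ Finset.range (s+1), ((2*s+1).choose k : ℂ) * (u⁻¹)^((2*s+1-2*k)*n))
        * u^((2*s+1)*n)
      = ∑ k ∈ Finset.range (s + 1), (Nat.choose (2*s+1) k : ℂ) * u ^ (2*n*k) := by
    rw [Finset.sum_mul]
    refine Finset.sum_congr rfl (fun k hk => ?_)
    have hk' : k ≤ s := by have := Finset.mem_range.mp hk; omega
    have hsplit : (2*s+1)*n = (2*s+1-2*k)*n + 2*n*k := by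
      calc (2*s+1)*n = ((2*s+1-2*k)+2*k)*n := by congr 1; omega
        _ = (2*s+1-2*k)*n + 2*n*k := by ring
    rw [hsplit, pow_add, inv_pow, ← mul_assoc]
    have hne : u^((2*s+1-2*k)*n) ≠ 0 := pow_ne_zero _ hu0
    field_simp
  rw [← hS]
  have hzpow : u ^ (-(n:ℤ)) = (u⁻¹)^n := by
    rw [zpow_neg, zpow_natCast, inv_pow]
  rw [hzpow]
  have hupow : u^((2*s+1)*n) ≠ 0 := pow_ne_zero _ hu0
  have h2s : ((2:ℂ)^(2*s)) ≠ 0 := pow_ne_zero _ two_ne_zero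
  obtain ⟨v, hv⟩ : ∃ v, u * v = 1 := ⟨u⁻¹, mul_inv_cancel₀ hu0⟩
  rw [show u⁻¹ = v from (eq_inv_of_mul_eq_one_right hv).symm] at *
  rw [div_pow, div_div_eq_mul_div,
    div_eq_div_iff (pow_ne_zero _ hA) (mul_ne_zero (mul_ne_zero hupow (pow_ne_zero _ hA)) huu)]
  rw [pow_succ (2:ℂ) (2*s)]
  field_simp
  ring
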